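/- Let (A, A*) be a tridiagonal pair on V with eigenspace orderings V_0, ..., V_d of A and V*_0, ..., V*_d of A*, with corresponding eigenvalues θ_0, ..., θ_d of A, and let τ_i = (λ − θ_0)···(λ − θ_{i−1}) for 0 ≤ i ≤ d. Then for every nonzero vector u ∈ V*_0, the vectors τ_0(A)u, τ_1(A)u, ..., τ_d(A)u are linearly independent over K; in particular, they form a basis of the subspace Du = {Xu : X ∈ D}, where D is the subalgebra of End(V) generated by A. -/

import Mathlib

open Polynomial

/-- A tridiagonal pair on `V`, with eigenspace orderings `Ev 0, ..., Ev d` of `A`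
(with eigenvalues `θ 0, ..., θ d`) and `Ew 0, ..., Ew d` of `B = A*`
(with eigenvalues `θ' 0, ..., θ' d`).  For indices `i > d` we set `Ev i = ⊥`,
`Ew i = ⊥`, encoding the conventions `V_{-1} = 0`, `V_{d+1} = 0`
(note `Ev (0 - 1) = Ev 0` by truncated subtraction, which is harmless in the
tridiagonal conditions below since `Ev i` appears in the sum anyway). -/
structure TridiagonalPair (K V : Type*) [Field K] [AddCommGroup V] [Module K V]
    [FiniteDimensional K V] where
  A : Module.End K V
  B : Module.End K V
  d : ℕ
  Ev : ℕ → Submodule K V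
  Ew : ℕ → Submodule K V
  θ : ℕ → K
  θ' : ℕ → K
  hEv_eig : ∀ i ≤ d, Ev i = Module.End.eigenspace A (θ i)
  hEv_ne : ∀ i ≤ d, Ev i ≠ ⊥
  hEv_all : ∀ μ : K, Module.End.eigenspace A μ ≠ ⊥ → ∃ i ≤ d, θ i = μ
  hθ_inj : ∀ i ≤ d, ∀ j ≤ d, θ i = θ j → i = j
  hEv_top : (⨆ i ∈ Finset.range (d + 1), Ev i) = ⊤
  hEv_bot : ∀ i, d < i → Ev i = ⊥
  hEw_eig : ∀ i ≤ d, Ew i = Module.End.eigenspace B (θ' i)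
  hEw_ne : ∀ i ≤ d, Ew i ≠ ⊥
  hEw_all : ∀ μ : K, Module.End.eigenspace B μ ≠ ⊥ → ∃ i ≤ d, θ' i = μ
  hθ'_inj : ∀ i ≤ d, ∀ j ≤ d, θ' i = θ' j → i = j
  hEw_top : (⨆ i ∈ Finset.range (d + 1), Ew i) = ⊤
  hEw_bot : ∀ i, d < i → Ew i = ⊥
  hTriB : ∀ i ≤ d, ∀ v ∈ Ev i, B v ∈ Ev (i - 1) ⊔ Ev i ⊔ Ev (i + 1)
  hTriA : ∀ i ≤ d, ∀ v ∈ Ew i, A v ∈ Ew (i - 1) ⊔ Ew i ⊔ Ew (i + 1)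
  hIrr : ∀ W : Submodule K V, (∀ v ∈ W, A v ∈ W) → (∀ v ∈ W, B v ∈ W) →
    W = ⊥ ∨ W = ⊤

/-- The polynomial `τ_i = (λ - θ_0)(λ - θ_1) ⋯ (λ - θ_{i-1})`. -/
noncomputable def tau {K : Type*} [Field K] (θ : ℕ → K) (i : ℕ) : Polynomial K :=
  ∏ k ∈ Finset.range i, (X - C (θ k))

section Aux
variable {K V : Type*} [Field K] [AddCommGroup V] [Module K V]

/-- induction principle for membership in a finite biSup of submodules -/
lemma tdp_biSup_induction {ι : Type*} (s : Finset ι) (W : ι → Submodule K V) {P : V → Prop}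
    (h0 : P 0) (hadd : ∀ a b, P a → P b → P (a + b))
    (hW : ∀ i ∈ s, ∀ v ∈ W i, P v) :
    ∀ v ∈ ⨆ i ∈ s, W i, P v := by
  intro v hv
  rw [iSup_subtype'] at hv
  exact Submodule.iSup_induction (motive := P) _ hv (fun i x hx => hW i i.2 x hx) h0 hadd

lemma tdp_le_biSup {ι : Type*} {s : Finset ι} (W : ι → Submodule K V) {i : ι} (hi : i ∈ s) :
    W i ≤ ⨆ j ∈ s, W j :=
  le_iSup₂ (f := fun j (_ : j ∈ s) => W j) i hi

lemma tdp_aeval_mul_apply (A : Module.End K V) (f g : K[X]) (v : V) :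
    aeval A (f * g) v = aeval A f (aeval A g v) := by
  rw [map_mul, Module.End.mul_apply]

lemma tdp_aeval_linear_apply (A : Module.End K V) (a : K) (v : V) :
    aeval A (X - C a) v = A v - a • v := by
  rw [map_sub, aeval_X, aeval_C, LinearMap.sub_apply, Module.algebraMap_end_apply]

lemma tdp_eig_aeval (A : Module.End K V) {c : K} {v : V} (hv : A v = c • v) (q : K[X]) :
    aeval A q v = q.eval c • v := by
  induction q using Polynomial.induction_on with
  | C a => simp [Module.algebraMap_end_apply]
  | add f g hf hg => rw [map_add, LinearMap.add_apply, hf, hg, eval_add, add_smul]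
  | monomial n a ih =>
    have h1 : (C a * X ^ (n + 1) : K[X]) = (C a * X ^ n) * X := by ring
    rw [h1, map_mul, Module.End.mul_apply, aeval_X, hv, map_smul, ih]
    simp [smul_smul]
    ring_nf

lemma tdp_tau_monic (θ : ℕ → K) (i : ℕ) : (tau θ i).Monic :=
  monic_prod_of_monic _ _ fun k _ => monic_X_sub_C _

lemma tdp_tau_natDegree (θ : ℕ → K) (i : ℕ) : (tau θ i).natDegree = i := by
  rw [tau, natDegree_prod]
  · simp
  · intro k _; exact X_sub_C_ne_zero _

lemma tdp_aeval_tau_succ (A : Module.End K V) (θ : ℕ → K) (i : ℕ) (v : V) :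
    aeval A (tau θ (i + 1)) v
      = A (aeval A (tau θ i) v) - θ i • (aeval A (tau θ i) v) := by
  have h : tau θ (i + 1) = (X - C (θ i)) * tau θ i := by
    rw [tau, tau, Finset.prod_range_succ, mul_comm]
  rw [h, tdp_aeval_mul_apply, tdp_aeval_linear_apply]

end Aux

section GG
variable {K V : Type*} [Field K] [AddCommGroup V] [Module K V]

/-- the top part `W_m + ... + W_d` -/
def GG (W : ℕ → Submodule K V) (d m : ℕ) : Submodule K V := ⨆ k ∈ Finset.Icc m d, W k

lemma GG_anti (W : ℕ → Submodule K V) (d : ℕ) {m m' : ℕ} (h : m ≤ m') :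
    GG W d m' ≤ GG W d m := by
  refine iSup₂_le fun k hk => ?_
  refine tdp_le_biSup W ?_
  simp only [Finset.mem_Icc] at hk ⊢
  omega

lemma W_le_GG (W : ℕ → Submodule K V) {d m k : ℕ} (h1 : m ≤ k) (h2 : k ≤ d) :
    W k ≤ GG W d m := by
  refine tdp_le_biSup W ?_
  simp only [Finset.mem_Icc]; omega

lemma GG_bot (W : ℕ → Submodule K V) (d : ℕ) : GG W d (d + 1) = ⊥ := by
  have : Finset.Icc (d + 1) d = ∅ := by
    apply Finset.Icc_eq_empty; omega
  simp [GG, this]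

lemma AGG (A : Module.End K V) (W : ℕ → Submodule K V) (μ : ℕ → K) (d : ℕ)
    (hW_eig : ∀ k ≤ d, W k ≤ Module.End.eigenspace A (μ k)) :
    ∀ m, ∀ v ∈ GG W d m, A v - μ m • v ∈ GG W d (m + 1) := by
  intro m
  refine tdp_biSup_induction _ _ ?_ ?_ ?_
  · simp
  · intro a b ha hb
    have h : A (a + b) - μ m • (a + b) = (A a - μ m • a) + (A b - μ m • b) := by
      rw [map_add, smul_add]; abel
    rw [h]; exact Submodule.add_mem _ ha hb
  · intro k hk v hv
    simp only [Finset.mem_Icc] at hk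
    have hA : A v = μ k • v := by
      rw [← Module.End.mem_eigenspace_iff]; exact hW_eig k hk.2 hv
    rw [hA, ← sub_smul]
    rcases eq_or_lt_of_le hk.1 with h | h
    · rw [← h]; simp
    · exact Submodule.smul_mem _ _ (W_le_GG W h hk.2 hv)

lemma BGG (B : Module.End K V) (W : ℕ → Submodule K V) (d : ℕ)
    (hW_bot : ∀ k, d < k → W k = ⊥)
    (hW_tri : ∀ k ≤ d, ∀ v ∈ W k, B v ∈ W (k - 1) ⊔ W k ⊔ W (k + 1)) :
    ∀ m, 1 ≤ m → ∀ v ∈ GG W d m, B v ∈ GG W d (m - 1) := by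
  intro m hm
  refine tdp_biSup_induction _ _ ?_ ?_ ?_
  · simp
  · intro a b ha hb; rw [map_add]; exact Submodule.add_mem _ ha hb
  · intro k hk v hv
    simp only [Finset.mem_Icc] at hk
    have h := hW_tri k hk.2 v hv
    have h1 : W (k - 1) ≤ GG W d (m - 1) := W_le_GG W (by omega) (by omega)
    have h2 : W k ≤ GG W d (m - 1) := W_le_GG W (by omega) hk.2
    have h3 : W (k + 1) ≤ GG W d (m - 1) := by
      rcases le_or_gt (k + 1) d with hle | hlt
      · exact W_le_GG W (by omega) hle
      · rw [hW_bot _ hlt]; exact bot_le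
    exact (sup_le (sup_le h1 h2) h3) h

end GG

namespace TridiagonalPair
variable {K V : Type*} [Field K] [AddCommGroup V] [Module K V] [FiniteDimensional K V]
variable (p : TridiagonalPair K V)

/-- the bottom part `Ew_0 + ... + Ew_i` -/
def F (i : ℕ) : Submodule K V := ⨆ j ∈ Finset.range (i + 1), p.Ew j

lemma Ew_le_F {j i : ℕ} (h : j ≤ i) : p.Ew j ≤ p.F i :=
  tdp_le_biSup p.Ew (by simp only [Finset.mem_range]; omega)

lemma F_mono {i i' : ℕ} (h : i ≤ i') : p.F i ≤ p.F i' := by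
  refine iSup₂_le fun j hj => ?_
  simp only [Finset.mem_range] at hj
  exact p.Ew_le_F (by omega)

lemma F_zero : p.F 0 = p.Ew 0 := by
  simp [F]

lemma hAv : ∀ k ≤ p.d, ∀ v ∈ p.Ev k, p.A v = p.θ k • v := by
  intro k hk v hv
  rw [← Module.End.mem_eigenspace_iff, ← p.hEv_eig k hk]; exact hv

lemma hBw : ∀ k ≤ p.d, ∀ v ∈ p.Ew k, p.B v = p.θ' k • v := by
  intro k hk v hv
  rw [← Module.End.mem_eigenspace_iff, ← p.hEw_eig k hk]; exact hv

lemma AF : ∀ i ≤ p.d, ∀ v ∈ p.F i, p.A v ∈ p.F (i + 1) := by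
  intro i hi
  refine tdp_biSup_induction _ _ ?_ ?_ ?_
  · simp
  · intro a b ha hb; rw [map_add]; exact Submodule.add_mem _ ha hb
  · intro j hj v hv
    simp only [Finset.mem_range] at hj
    have h := p.hTriA j (by omega) v hv
    have h1 : p.Ew (j - 1) ≤ p.F (i + 1) := p.Ew_le_F (by omega)
    have h2 : p.Ew j ≤ p.F (i + 1) := p.Ew_le_F (by omega)
    have h3 : p.Ew (j + 1) ≤ p.F (i + 1) := p.Ew_le_F (by omega)
    exact (sup_le (sup_le h1 h2) h3) h

lemma BF0 : ∀ v ∈ p.F 0, p.B v = p.θ' 0 • v := by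
  intro v hv
  rw [p.F_zero] at hv
  exact p.hBw 0 (Nat.zero_le _) v hv

lemma BF' : ∀ i, i ≤ p.d → 1 ≤ i → ∀ v ∈ p.F i, p.B v - p.θ' i • v ∈ p.F (i - 1) := by
  intro i hi h1
  refine tdp_biSup_induction _ _ ?_ ?_ ?_
  · simp
  · intro a b ha hb
    have h : p.B (a + b) - p.θ' i • (a + b) = (p.B a - p.θ' i • a) + (p.B b - p.θ' i • b) := by
      rw [map_add, smul_add]; abel
    rw [h]; exact Submodule.add_mem _ ha hb
  · intro j hj v hv
    simp only [Finset.mem_range] at hj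
    have hB : p.B v = p.θ' j • v := p.hBw j (by omega) v hv
    rw [hB, ← sub_smul]
    rcases eq_or_lt_of_le (Nat.lt_succ_iff.mp hj) with h | h
    · rw [h]; simp
    · exact Submodule.smul_mem _ _ (p.Ew_le_F (by omega) hv)

lemma F_ne_top (hd : 1 ≤ p.d) : p.F (p.d - 1) ≠ ⊤ := by
  intro htop
  obtain ⟨v, hv, hv0⟩ := Submodule.exists_mem_ne_zero_of_ne_bot (p.hEw_ne p.d le_rfl)
  have hdisj := Module.End.eigenspaces_iSupIndep p.B (p.θ' p.d)
  have hle : p.F (p.d - 1) ≤ ⨆ (ν : K) (_ : ν ≠ p.θ' p.d), Module.End.eigenspace p.B ν := by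
    refine iSup₂_le fun j hj => ?_
    simp only [Finset.mem_range] at hj
    have hjd : j ≤ p.d := by omega
    have hne : p.θ' j ≠ p.θ' p.d := by
      intro he
      have := p.hθ'_inj j hjd p.d le_rfl he
      omega
    rw [p.hEw_eig j hjd]
    exact le_iSup₂ (f := fun ν (_ : ν ≠ p.θ' p.d) => Module.End.eigenspace p.B ν) _ hne
  have hvF : v ∈ p.F (p.d - 1) := htop ▸ Submodule.mem_top
  have hv1 : v ∈ Module.End.eigenspace p.B (p.θ' p.d) := by
    rw [← p.hEw_eig p.d le_rfl]; exact hv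
  have : v ∈ (⊥ : Submodule K V) := hdisj.le_bot ⟨hv1, hle hvF⟩
  exact hv0 (Submodule.mem_bot K |>.mp this)

/-- The key vanishing lemma: `F_i ∩ (W_{i+1} + ... + W_d) = 0` for any
tridiagonal-compatible ordering `W` of the eigenspaces of `A`. -/
lemma key (W : ℕ → Submodule K V) (μ : ℕ → K)
    (hW_eig : ∀ k ≤ p.d, W k ≤ Module.End.eigenspace p.A (μ k))
    (hW_bot : ∀ k, p.d < k → W k = ⊥)
    (hW_tri : ∀ k ≤ p.d, ∀ v ∈ W k, p.B v ∈ W (k - 1) ⊔ W k ⊔ W (k + 1)) :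
    ∀ i ≤ p.d, p.F i ⊓ GG W p.d (i + 1) = ⊥ := by
  set Z : ℕ → Submodule K V := fun i => p.F i ⊓ GG W p.d (i + 1) with hZ
  have hZd : Z p.d = ⊥ := by
    rw [hZ]; simp only; rw [GG_bot]; exact inf_bot_eq _
  -- the candidate invariant subspace
  set S : Submodule K V := ⨆ i ∈ Finset.range (p.d + 1), Z i with hS
  have hZS : ∀ i ≤ p.d, Z i ≤ S := fun i hi =>
    tdp_le_biSup Z (by simp only [Finset.mem_range]; omega)
  have hSA : ∀ v ∈ S, p.A v ∈ S := by
    refine tdp_biSup_induction _ _ ?_ ?_ ?_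
    · simp
    · intro a b ha hb; rw [map_add]; exact Submodule.add_mem _ ha hb
    · intro i hi v hv
      simp only [Finset.mem_range] at hi
      rcases eq_or_lt_of_le (Nat.lt_succ_iff.mp hi) with hieq | hilt
      · rw [hieq, hZd] at hv
        simp only [Submodule.mem_bot] at hv
        rw [hv, map_zero]; exact Submodule.zero_mem _
      · -- i < d
        have hvF : v ∈ p.F i := hv.1
        have hvG : v ∈ GG W p.d (i + 1) := hv.2
        have h1 : p.A v - μ (i + 1) • v ∈ Z (i + 1) := by
          constructor
          · have hAv : p.A v ∈ p.F (i + 1) := p.AF i (by omega) v hvF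
            exact Submodule.sub_mem _ hAv
              (p.F_mono (by omega) (Submodule.smul_mem _ _ hvF))
          · exact AGG p.A W μ p.d hW_eig (i + 1) v hvG
        have h2 : μ (i + 1) • v ∈ Z i := Submodule.smul_mem _ _ hv
        have : p.A v = (p.A v - μ (i + 1) • v) + μ (i + 1) • v := by abel
        rw [this]
        exact Submodule.add_mem _ (hZS (i + 1) (by omega) h1) (hZS i (by omega) h2)
  have hSB : ∀ v ∈ S, p.B v ∈ S := by
    refine tdp_biSup_induction _ _ ?_ ?_ ?_
    · simp
    · intro a b ha hb; rw [map_add]; exact Submodule.add_mem _ ha hb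
    · intro i hi v hv
      simp only [Finset.mem_range] at hi
      have hid : i ≤ p.d := by omega
      have hvF : v ∈ p.F i := hv.1
      have hvG : v ∈ GG W p.d (i + 1) := hv.2
      rcases Nat.eq_zero_or_pos i with hi0 | hi1
      · -- i = 0 : B v = θ'_0 • v ∈ Z 0
        subst hi0
        rw [p.BF0 v hvF]
        exact hZS 0 (Nat.zero_le _) (Submodule.smul_mem _ _ hv)
      · have h1 : p.B v - p.θ' i • v ∈ Z (i - 1) := by
          constructor
          · exact p.BF' i hid hi1 v hvF
          · have ha : p.B v ∈ GG W p.d i := BGG p.B W p.d hW_bot hW_tri (i + 1) (by omega) v hvG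
            have hb : p.θ' i • v ∈ GG W p.d i :=
              GG_anti W p.d (by omega) (Submodule.smul_mem _ _ hvG)
            have : (i - 1) + 1 = i := by omega
            rw [this]
            exact Submodule.sub_mem _ ha hb
        have h2 : p.θ' i • v ∈ Z i := Submodule.smul_mem _ _ hv
        have : p.B v = (p.B v - p.θ' i • v) + p.θ' i • v := by abel
        rw [this]
        exact Submodule.add_mem _ (hZS (i - 1) (by omega) h1) (hZS i hid h2)
  intro i hi
  rcases eq_or_lt_of_le hi with hieq | hilt
  · rw [hieq]; exact hZd
  -- i < d, so d ≥ 1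
  have hd1 : 1 ≤ p.d := by omega
  have hSbot : S = ⊥ := by
    rcases p.hIrr S hSA hSB with h | h
    · exact h
    · exfalso
      apply p.F_ne_top hd1
      rw [eq_top_iff, ← h]
      refine iSup₂_le fun j hj => ?_
      simp only [Finset.mem_range] at hj
      rcases eq_or_lt_of_le (Nat.lt_succ_iff.mp hj) with hjeq | hjlt
      · rw [hjeq, hZd]; exact bot_le
      · exact le_trans inf_le_left (p.F_mono (by omega))
  have : Z i ≤ S := hZS i hi
  rw [hSbot] at this
  exact le_bot_iff.mp this

lemma key1 : ∀ i ≤ p.d, p.F i ⊓ GG p.Ev p.d (i + 1) = ⊥ :=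
  p.key p.Ev p.θ (fun k hk => le_of_eq (p.hEv_eig k hk)) p.hEv_bot p.hTriB

lemma key2 : p.Ew 0 ⊓ (⨆ k ∈ Finset.range p.d, p.Ev k) = ⊥ := by
  set Wr : ℕ → Submodule K V := fun k => if k ≤ p.d then p.Ev (p.d - k) else ⊥ with hWr
  have hWr_eq : ∀ k ≤ p.d, Wr k = p.Ev (p.d - k) := by
    intro k hk; rw [hWr]; simp only [if_pos hk]
  have hEig : ∀ k ≤ p.d, Wr k ≤ Module.End.eigenspace p.A (p.θ (p.d - k)) := by
    intro k hk; rw [hWr_eq k hk]; exact le_of_eq (p.hEv_eig _ (by omega))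
  have hBot : ∀ k, p.d < k → Wr k = ⊥ := by
    intro k hk; rw [hWr]; simp only [if_neg (by omega : ¬ k ≤ p.d)]
  have hTri : ∀ k ≤ p.d, ∀ v ∈ Wr k, p.B v ∈ Wr (k - 1) ⊔ Wr k ⊔ Wr (k + 1) := by
    intro k hk v hv
    rw [hWr_eq k hk] at hv
    have h := p.hTriB (p.d - k) (by omega) v hv
    have h2 : p.Ev (p.d - k) ≤ Wr (k - 1) ⊔ Wr k ⊔ Wr (k + 1) := by
      rw [← hWr_eq k hk]
      exact le_sup_of_le_left le_sup_right
    have h3 : p.Ev (p.d - k + 1) ≤ Wr (k - 1) ⊔ Wr k ⊔ Wr (k + 1) := by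
      rcases Nat.eq_zero_or_pos k with h0 | h1
      · subst h0
        have he : p.d - 0 + 1 = p.d + 1 := by omega
        rw [he, p.hEv_bot (p.d + 1) (by omega)]
        exact bot_le
      · have : p.d - k + 1 = p.d - (k - 1) := by omega
        rw [this, ← hWr_eq (k - 1) (by omega)]
        exact le_sup_of_le_left le_sup_left
    have h1 : p.Ev (p.d - k - 1) ≤ Wr (k - 1) ⊔ Wr k ⊔ Wr (k + 1) := by
      rcases eq_or_lt_of_le hk with hkd | hkd
      · have : p.d - k - 1 = p.d - k := by omega
        rw [this]; exact h2
      · have : p.d - k - 1 = p.d - (k + 1) := by omega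
        rw [this, ← hWr_eq (k + 1) (by omega)]
        exact le_sup_right
    exact (sup_le (sup_le h1 h2) h3) h
  have hkey := p.key Wr (fun k => p.θ (p.d - k)) hEig hBot hTri 0 (Nat.zero_le _)
  have hGeq : GG Wr p.d 1 = ⨆ k ∈ Finset.range p.d, p.Ev k := by
    apply le_antisymm
    · refine iSup₂_le fun k hk => ?_
      simp only [Finset.mem_Icc] at hk
      rw [hWr_eq k hk.2]
      exact tdp_le_biSup p.Ev (by simp only [Finset.mem_range]; omega)
    · refine iSup₂_le fun j hj => ?_
      simp only [Finset.mem_range] at hj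
      have : p.Ev j = Wr (p.d - j) := by
        rw [hWr_eq (p.d - j) (by omega)]
        congr 1; omega
      rw [this]
      exact tdp_le_biSup Wr (by simp only [Finset.mem_Icc]; omega)
  rw [p.F_zero, hGeq] at hkey
  exact hkey

lemma aeval_tau_zero (u : V) : aeval p.A (tau p.θ 0) u = u := by
  simp [tau]

lemma xF (u : V) (hu : u ∈ p.Ew 0) : ∀ i ≤ p.d, aeval p.A (tau p.θ i) u ∈ p.F i := by
  intro i
  induction i with
  | zero =>
    intro _
    rw [p.aeval_tau_zero, p.F_zero]; exact hu
  | succ i ih =>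
    intro hi
    rw [tdp_aeval_tau_succ]
    refine Submodule.sub_mem _ ?_ ?_
    · exact p.AF i (by omega) _ (ih (by omega))
    · exact p.F_mono (by omega) (Submodule.smul_mem _ _ (ih (by omega)))

lemma xGG (u : V) (hu : u ∈ p.Ew 0) : ∀ i ≤ p.d, aeval p.A (tau p.θ i) u ∈ GG p.Ev p.d i := by
  intro i
  induction i with
  | zero =>
    intro _
    have hicc : Finset.Icc 0 p.d = Finset.range (p.d + 1) := by
      ext k
      simp only [Finset.mem_Icc, Finset.mem_range]
      omega
    have : GG p.Ev p.d 0 = ⊤ := by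
      rw [GG, hicc, p.hEv_top]
    rw [this]; trivial
  | succ i ih =>
    intro hi
    rw [tdp_aeval_tau_succ]
    exact AGG p.A p.Ev p.θ p.d (fun k hk => le_of_eq (p.hEv_eig k hk)) i _ (ih (by omega))

lemma annih : ∀ m, m ≤ p.d + 1 → ∀ v ∈ (⨆ k ∈ Finset.range m, p.Ev k),
    aeval p.A (tau p.θ m) v = 0 := by
  intro m hm
  refine tdp_biSup_induction _ _ ?_ ?_ ?_
  · exact map_zero _
  · intro a b ha hb; rw [map_add, ha, hb, add_zero]
  · intro k hk v hv
    simp only [Finset.mem_range] at hk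
    have h1 : (X - C (p.θ k)) * ∏ j ∈ (Finset.range m).erase k, (X - C (p.θ j)) = tau p.θ m := by
      rw [tau]
      exact Finset.mul_prod_erase (Finset.range m) (fun j => X - C (p.θ j)) (Finset.mem_range.mpr hk)
    have hfac : tau p.θ m
        = (∏ j ∈ (Finset.range m).erase k, (X - C (p.θ j))) * (X - C (p.θ k)) := by
      rw [← h1, mul_comm]
    rw [hfac, tdp_aeval_mul_apply, tdp_aeval_linear_apply, p.hAv k (by omega) v hv, sub_self,
      map_zero]

lemma aeval_top_zero (v : V) : aeval p.A (tau p.θ (p.d + 1)) v = 0 :=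
  p.annih (p.d + 1) le_rfl v (by rw [p.hEv_top]; trivial)

lemma xd_ne (u : V) (hu : u ∈ p.Ew 0) (hu0 : u ≠ 0) :
    aeval p.A (tau p.θ p.d) u ≠ 0 := by
  intro h0
  have htop : (⨆ k ∈ Finset.range p.d, p.Ev k) ⊔ p.Ev p.d = ⊤ := by
    rw [← p.hEv_top, Finset.range_add_one, Finset.iSup_insert, sup_comm]
  obtain ⟨g, hg, e, he, hge⟩ := Submodule.mem_sup.mp (htop ▸ (Submodule.mem_top : u ∈ ⊤))
  have hgz : aeval p.A (tau p.θ p.d) g = 0 := p.annih p.d (by omega) g hg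
  have heA : p.A e = p.θ p.d • e := p.hAv p.d le_rfl e he
  have hee : aeval p.A (tau p.θ p.d) e = (tau p.θ p.d).eval (p.θ p.d) • e :=
    tdp_eig_aeval p.A heA _
  have hne : (tau p.θ p.d).eval (p.θ p.d) ≠ 0 := by
    rw [tau, eval_prod]
    refine Finset.prod_ne_zero_iff.mpr fun k hk => ?_
    simp only [Finset.mem_range] at hk
    simp only [eval_sub, eval_X, eval_C]
    intro hzz
    have heq : p.θ p.d = p.θ k := sub_eq_zero.mp hzz
    have := p.hθ_inj p.d le_rfl k (by omega) heq
    omega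
  rw [← hge, map_add, hgz, hee, zero_add] at h0
  have he0 : e = 0 := by
    rcases smul_eq_zero.mp h0 with h | h
    · exact absurd h hne
    · exact h
  rw [he0, add_zero] at hge
  have hmem : u ∈ p.Ew 0 ⊓ (⨆ k ∈ Finset.range p.d, p.Ev k) := ⟨hu, hge ▸ hg⟩
  rw [p.key2] at hmem
  exact hu0 (Submodule.mem_bot K |>.mp hmem)

lemma xi_ne (u : V) (hu : u ∈ p.Ew 0) (hu0 : u ≠ 0) :
    ∀ i ≤ p.d, aeval p.A (tau p.θ i) u ≠ 0 := by
  intro i hi h0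
  apply p.xd_ne u hu hu0
  have hfac : tau p.θ p.d = (∏ k ∈ Finset.Ico i p.d, (X - C (p.θ k))) * tau p.θ i := by
    rw [tau, tau, mul_comm, Finset.prod_range_mul_prod_Ico _ hi]
  rw [hfac, tdp_aeval_mul_apply, h0, map_zero]

lemma lin_claim (u : V) (hu : u ∈ p.Ew 0) (hu0 : u ≠ 0) :
    ∀ t, t ≤ p.d → ∀ c : ℕ → K,
      (∑ i ∈ Finset.range (t + 1), c i • aeval p.A (tau p.θ i) u) = 0 → ∀ i ≤ t, c i = 0 := by
  intro t
  induction t with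
  | zero =>
    intro _ c hsum i hi
    rw [Finset.sum_range_one, p.aeval_tau_zero] at hsum
    have hi0 : i = 0 := by omega
    subst hi0
    rcases smul_eq_zero.mp hsum with h | h
    · exact h
    · exact absurd h hu0
  | succ t ih =>
    intro ht c hsum i hi
    have hct : c (t + 1) = 0 := by
      by_contra hc
      rw [Finset.sum_range_succ] at hsum
      have hsum' : c (t + 1) • aeval p.A (tau p.θ (t + 1)) u
          = -∑ i ∈ Finset.range (t + 1), c i • aeval p.A (tau p.θ i) u :=
        eq_neg_of_add_eq_zero_right hsum
      have hmem1 : c (t + 1) • aeval p.A (tau p.θ (t + 1)) u ∈ p.F t := by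
        rw [hsum']
        refine Submodule.neg_mem _ (Submodule.sum_mem _ fun i hi' => ?_)
        simp only [Finset.mem_range] at hi'
        exact Submodule.smul_mem _ _ (p.F_mono (by omega) (p.xF u hu i (by omega)))
      have hmem2 : c (t + 1) • aeval p.A (tau p.θ (t + 1)) u ∈ GG p.Ev p.d (t + 1) :=
        Submodule.smul_mem _ _ (p.xGG u hu (t + 1) (by omega))
      have hbot := p.key1 t (by omega)
      have : c (t + 1) • aeval p.A (tau p.θ (t + 1)) u ∈ (⊥ : Submodule K V) := by
        rw [← hbot]; exact ⟨hmem1, hmem2⟩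
      rw [Submodule.mem_bot] at this
      rcases smul_eq_zero.mp this with h | h
      · exact hc h
      · exact p.xi_ne u hu hu0 (t + 1) (by omega) h
    rcases eq_or_lt_of_le hi with hieq | hilt
    · rw [hieq]; exact hct
    · refine ih (by omega) c ?_ i (by omega)
      rw [Finset.sum_range_succ, hct, zero_smul, add_zero] at hsum
      exact hsum

lemma span_aux (u : V) : ∀ m, m ≤ p.d → ∀ r : K[X], r.natDegree ≤ m →
    aeval p.A r u ∈ Submodule.span K
      (Set.range fun i : Fin (p.d + 1) => aeval p.A (tau p.θ i) u) := by
  intro m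
  induction m with
  | zero =>
    intro _ r hr
    obtain ⟨a, rfl⟩ := Polynomial.natDegree_eq_zero.mp (le_antisymm hr (Nat.zero_le _))
    have h : aeval p.A (C a) u = a • aeval p.A (tau p.θ 0) u := by
      rw [p.aeval_tau_zero, aeval_C, Module.algebraMap_end_apply]
    rw [h]
    refine Submodule.smul_mem _ _ (Submodule.subset_span ⟨⟨0, by omega⟩, rfl⟩)
  | succ m ih =>
    intro hm r hr
    rcases le_or_gt r.natDegree m with h | h
    · exact ih (by omega) r h
    · have hdeg : r.natDegree = m + 1 := by omega
      have hr0 : r ≠ 0 := by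
        intro h0; rw [h0] at hdeg; simp at hdeg
      set s : K[X] := C r.leadingCoeff * tau p.θ (m + 1) with hs
      have hs0 : s ≠ 0 := by
        rw [hs]
        refine mul_ne_zero ?_ (tdp_tau_monic p.θ (m + 1)).ne_zero
        simp [Polynomial.leadingCoeff_ne_zero.mpr hr0]
      have hslc : s.leadingCoeff = r.leadingCoeff := by
        rw [hs, leadingCoeff_mul, leadingCoeff_C, (tdp_tau_monic p.θ (m + 1)).leadingCoeff,
          mul_one]
      have hsnd : s.natDegree = m + 1 := by
        rw [hs, natDegree_mul (by simpa [Polynomial.leadingCoeff_ne_zero.mpr hr0] using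
          (C_ne_zero.mpr (Polynomial.leadingCoeff_ne_zero.mpr hr0)))
          (tdp_tau_monic p.θ (m + 1)).ne_zero, natDegree_C, tdp_tau_natDegree, zero_add]
      have hlt : (r - s).degree < r.degree := by
        refine Polynomial.degree_sub_lt ?_ hr0 hslc.symm
        rw [Polynomial.degree_eq_natDegree hr0, Polynomial.degree_eq_natDegree hs0, hdeg, hsnd]
      have hnd : (r - s).natDegree ≤ m := by
        rcases eq_or_ne (r - s) 0 with h0 | h0
        · rw [h0]; simp
        · have := Polynomial.natDegree_lt_natDegree h0 hlt
          omega
      have hmem1 := ih (by omega) (r - s) hnd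
      have hsplit : aeval p.A r u
          = aeval p.A (r - s) u + r.leadingCoeff • aeval p.A (tau p.θ (m + 1)) u := by
        have hsu : aeval p.A s u = r.leadingCoeff • aeval p.A (tau p.θ (m + 1)) u := by
          rw [hs, tdp_aeval_mul_apply, aeval_C, Module.algebraMap_end_apply]
        rw [map_sub, LinearMap.sub_apply, hsu]
        abel
      rw [hsplit]
      exact Submodule.add_mem _ hmem1
        (Submodule.smul_mem _ _ (Submodule.subset_span ⟨⟨m + 1, by omega⟩, rfl⟩))

end TridiagonalPair

/-- For every nonzero `u ∈ V*_0`, the vectors `τ_0(A)u, τ_1(A)u, ..., τ_d(A)u`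
are linearly independent over `K`, and they form a basis of the subspace
`D u = {X u : X ∈ D}`, where `D` is the subalgebra of `End(V)` generated by `A`. -/
theorem stmt2 {K V : Type*} [Field K] [AddCommGroup V] [Module K V]
    [FiniteDimensional K V] (hpos : 0 < Module.finrank K V)
    (p : TridiagonalPair K V)
    (u : V) (hu : u ∈ p.Ew 0) (hu0 : u ≠ 0) :
    LinearIndependent K (fun i : Fin (p.d + 1) => (aeval p.A (tau p.θ i)) u) ∧
    Submodule.span K (Set.range (fun i : Fin (p.d + 1) => (aeval p.A (tau p.θ i)) u)) =
      Submodule.map (LinearMap.applyₗ u)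
        (Subalgebra.toSubmodule (Algebra.adjoin K {p.A})) := by
  constructor
  · -- linear independence
    rw [Fintype.linearIndependent_iff]
    intro g hg
    set c : ℕ → K := fun n => if h : n < p.d + 1 then g ⟨n, h⟩ else 0 with hc
    have hsum : ∑ i ∈ Finset.range (p.d + 1), c i • aeval p.A (tau p.θ i) u = 0 := by
      rw [← Fin.sum_univ_eq_sum_range (fun n => c n • aeval p.A (tau p.θ n) u) (p.d + 1)]
      rw [← hg]
      refine Finset.sum_congr rfl fun i _ => ?_
      have : c ↑i = g i := by
        rw [hc]; simp only [i.isLt, dif_pos, Fin.eta]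
      rw [this]
    intro i
    have hresult := p.lin_claim u hu hu0 p.d le_rfl c hsum ↑i (by omega)
    have : c ↑i = g i := by
      rw [hc]; simp only [i.isLt, dif_pos, Fin.eta]
    rw [← this]; exact hresult
  · -- span equals D u
    apply le_antisymm
    · rw [Submodule.span_le]
      rintro _ ⟨i, rfl⟩
      refine ⟨aeval p.A (tau p.θ i), ?_, rfl⟩
      simp only [SetLike.mem_coe, Subalgebra.mem_toSubmodule,
        Algebra.adjoin_singleton_eq_range_aeval, AlgHom.mem_range]
      exact ⟨tau p.θ i, rfl⟩
    · rintro _ ⟨T, hT, rfl⟩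
      simp only [SetLike.mem_coe, Subalgebra.mem_toSubmodule,
        Algebra.adjoin_singleton_eq_range_aeval, AlgHom.mem_range] at hT
      obtain ⟨q, rfl⟩ := hT
      show aeval p.A q u ∈ _
      have hmon : (tau p.θ (p.d + 1)).Monic := tdp_tau_monic _ _
      have hdiv := Polynomial.modByMonic_add_div q (tau p.θ (p.d + 1))
      have h1 : aeval p.A q u = aeval p.A (q %ₘ tau p.θ (p.d + 1)) u := by
        conv_lhs => rw [← hdiv]
        rw [map_add, LinearMap.add_apply, tdp_aeval_mul_apply, p.aeval_top_zero, add_zero]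
      rw [h1]
      refine p.span_aux u p.d le_rfl _ ?_
      have hdm := Polynomial.degree_modByMonic_lt q hmon
      rcases eq_or_ne (q %ₘ tau p.θ (p.d + 1)) 0 with h0 | h0
      · rw [h0]; simp
      · have := Polynomial.natDegree_lt_natDegree h0 hdm
        rw [tdp_tau_natDegree] at this
        omega
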